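/- Let A ∈ ℝ^{n×n} be Hurwitz, B ∈ ℝ^{n×m}, C ∈ ℝ^{p×n}, D ∈ ℝ^{p×m}, and γ > 0 with Dᵀ D − γ² I ≻ 0. If there exists a symmetric matrix X such that X A + Aᵀ X + Cᵀ C + (X B + Cᵀ D)(γ² I − Dᵀ D)⁻¹(Bᵀ X + Dᵀ C) ≻ 0, then for every ω ∈ ℝ and every unit vector u ∈ ℂ^m, ‖(C(iωI − A)⁻¹B + D)u‖ > γ; i.e., the minimum singular value of the transfer matrix G(iω) = C(iωI − A)⁻¹B + D exceeds γ at every frequency. -/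

import Mathlib

open Matrix

namespace HminusAux
noncomputable abbrev cm {k l : ℕ} (M : Matrix (Fin k) (Fin l) ℝ) :
    Matrix (Fin k) (Fin l) ℂ := M.map Complex.ofReal

lemma cm_mul {k l r : ℕ} (M : Matrix (Fin k) (Fin l) ℝ) (N : Matrix (Fin l) (Fin r) ℝ) :
    cm (M * N) = cm M * cm N := Matrix.map_mul (f := Complex.ofRealHom)

lemma cm_add {k l : ℕ} (M N : Matrix (Fin k) (Fin l) ℝ) :
    cm (M + N) = cm M + cm N := by ext i j; simp

lemma cm_sub {k l : ℕ} (M N : Matrix (Fin k) (Fin l) ℝ) :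
    cm (M - N) = cm M - cm N := by ext i j; simp

lemma cm_one {k : ℕ} : cm (1 : Matrix (Fin k) (Fin k) ℝ) = 1 := by
  ext i j; simp [Matrix.one_apply]; split_ifs <;> simp

lemma cm_smul {k l : ℕ} (a : ℝ) (M : Matrix (Fin k) (Fin l) ℝ) :
    cm (a • M) = (a : ℂ) • cm M := by ext i j; simp

lemma cm_conjTranspose {k l : ℕ} (M : Matrix (Fin k) (Fin l) ℝ) :
    (cm M)ᴴ = cm Mᵀ := by
  ext i j; simp [Matrix.conjTranspose_apply]

lemma adj {k l : ℕ} (M : Matrix (Fin k) (Fin l) ℝ) (a : Fin k → ℂ) (b : Fin l → ℂ) :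
    star a ⬝ᵥ (cm M *ᵥ b) = star (cm Mᵀ *ᵥ a) ⬝ᵥ b := by
  rw [Matrix.star_mulVec, cm_conjTranspose, Matrix.transpose_transpose,
      ← Matrix.dotProduct_mulVec]

lemma re_quad {k : ℕ} (M : Matrix (Fin k) (Fin k) ℝ) (v : Fin k → ℂ) :
    (star v ⬝ᵥ (cm M *ᵥ v)).re
      = (fun i => (v i).re) ⬝ᵥ (M *ᵥ fun i => (v i).re)
        + (fun i => (v i).im) ⬝ᵥ (M *ᵥ fun i => (v i).im) := by
  simp only [dotProduct, Matrix.mulVec, Pi.star_apply, Finset.mul_sum, Complex.re_sum]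
  rw [← Finset.sum_add_distrib]
  refine Finset.sum_congr rfl fun i _ => ?_
  rw [← Finset.sum_add_distrib]
  refine Finset.sum_congr rfl fun j _ => ?_
  simp [Complex.mul_re, Complex.mul_im, Matrix.map_apply, RCLike.star_def]

lemma posdef_map {k : ℕ} {M : Matrix (Fin k) (Fin k) ℝ} (hM : M.PosDef)
    {v : Fin k → ℂ} (hv : v ≠ 0) :
    0 < (star v ⬝ᵥ (cm M *ᵥ v)).re := by
  rw [re_quad]
  have hre : ∀ w : Fin k → ℝ, 0 ≤ w ⬝ᵥ (M *ᵥ w) := by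
    intro w
    have := hM.posSemidef.dotProduct_mulVec_nonneg w
    simpa using this
  have : (fun i => (v i).re) ≠ 0 ∨ (fun i => (v i).im) ≠ 0 := by
    by_contra h
    push_neg at h
    apply hv
    funext i
    have h1 := congrFun h.1 i
    have h2 := congrFun h.2 i
    simp at h1 h2
    exact Complex.ext h1 h2
  rcases this with h | h
  · have := hM.dotProduct_mulVec_pos h
    simp only [star_trivial] at this ⊢
    nlinarith [hre (fun i => (v i).im)]
  · have := hM.dotProduct_mulVec_pos h
    simp only [star_trivial] at this ⊢
    nlinarith [hre (fun i => (v i).re)]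

end HminusAux

open HminusAux

/-- Sufficiency direction of Lemma 2 (H₋ index): if `A` is Hurwitz, `Dᵀ D − γ² I ≻ 0`,
and a symmetric `X` satisfies the Riccati-type inequality, then at every frequency `ω`
and for every unit vector `u ∈ ℂ^m`, `‖G(iω) u‖ > γ` where
`G(iω) = C(iωI − A)⁻¹ B + D`. -/
theorem hminus_index_sufficiency {n m p : ℕ}
    (A : Matrix (Fin n) (Fin n) ℝ) (B : Matrix (Fin n) (Fin m) ℝ)
    (C : Matrix (Fin p) (Fin n) ℝ) (D : Matrix (Fin p) (Fin m) ℝ)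
    (X : Matrix (Fin n) (Fin n) ℝ) (γ : ℝ)
    (hA : ∀ μ ∈ spectrum ℂ (A.map (Complex.ofReal)), μ.re < 0)
    (hγ : 0 < γ)
    (hD : (Dᵀ * D - γ ^ 2 • (1 : Matrix (Fin m) (Fin m) ℝ)).PosDef)
    (hX : X.IsHermitian)
    (hIneq : (X * A + Aᵀ * X + Cᵀ * C
        + (X * B + Cᵀ * D) * (γ ^ 2 • (1 : Matrix (Fin m) (Fin m) ℝ) - Dᵀ * D)⁻¹
          * (Bᵀ * X + Dᵀ * C)).PosDef) :
    ∀ ω : ℝ, ∀ u : EuclideanSpace ℂ (Fin m), ‖u‖ = 1 →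
      γ < ‖(WithLp.equiv 2 (Fin p → ℂ)).symm
        (((C.map Complex.ofReal
            * ((Complex.I * ω) • (1 : Matrix (Fin n) (Fin n) ℂ)
                - A.map Complex.ofReal)⁻¹
            * B.map Complex.ofReal + D.map Complex.ofReal)).mulVec u)‖ := by
  intro ω u hu
  classical
  set μ : ℂ := Complex.I * ω with hμdef
  -- iω is not in the spectrum of A
  have hμ : μ ∉ spectrum ℂ (cm A) := by
    intro hmem
    have h1 := hA μ hmem
    have : μ.re = 0 := by
      simp [hμdef, Complex.mul_re]
    rw [this] at h1
    exact lt_irrefl 0 h1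
  set Z : Matrix (Fin n) (Fin n) ℂ := μ • (1 : Matrix (Fin n) (Fin n) ℂ) - cm A with hZdef
  have hUnit : IsUnit Z := by
    rw [spectrum.mem_iff, not_not] at hμ
    rwa [Algebra.algebraMap_eq_smul_one] at hμ
  have hdet : IsUnit Z.det := (Matrix.isUnit_iff_isUnit_det Z).mp hUnit
  have hZZ : Z * Z⁻¹ = 1 := Matrix.mul_nonsing_inv Z hdet
  set x : Fin n → ℂ := Z⁻¹ *ᵥ (cm B *ᵥ u) with hxdef
  have hAx : cm A *ᵥ x = μ • x - cm B *ᵥ u := by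
    have h1 : Z *ᵥ x = cm B *ᵥ u := by
      rw [hxdef, Matrix.mulVec_mulVec, hZZ, Matrix.one_mulVec]
    have h2 : Z *ᵥ x = μ • x - cm A *ᵥ x := by
      rw [hZdef, Matrix.sub_mulVec, Matrix.smul_mulVec, Matrix.one_mulVec]
    rw [h2] at h1
    linear_combination (norm := module) -h1
  set y : Fin p → ℂ := cm C *ᵥ x + cm D *ᵥ u with hydef
  have hy : (cm C * Z⁻¹ * cm B + cm D) *ᵥ u = y := by
    rw [hydef, Matrix.add_mulVec, hxdef, Matrix.mulVec_mulVec, Matrix.mulVec_mulVec,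
      Matrix.mul_assoc]
  have hXt : Xᵀ = X := by
    ext i j
    simpa using congrFun (congrFun hX i) j
  set Wr : Matrix (Fin m) (Fin m) ℝ := γ ^ 2 • 1 - Dᵀ * D with hWrdef
  have hDW : (-Wr).PosDef := by rw [hWrdef, neg_sub]; exact hD
  have hdetWr : IsUnit Wr.det := by
    refine isUnit_iff_ne_zero.mpr fun h => ?_
    have h1 : (0:ℝ) < (-Wr).det := hDW.det_pos
    rw [Matrix.det_neg, h, mul_zero] at h1
    exact lt_irrefl 0 h1
  have hWW : Wr * Wr⁻¹ = 1 := Matrix.mul_nonsing_inv _ hdetWr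
  have hWW' : Wr⁻¹ * Wr = 1 := Matrix.nonsing_inv_mul _ hdetWr
  have hWrT : Wrᵀ = Wr := by
    rw [hWrdef]
    simp [Matrix.transpose_sub, Matrix.transpose_smul, Matrix.transpose_mul]
  have hWiT : (Wr⁻¹)ᵀ = Wr⁻¹ := by rw [Matrix.transpose_nonsing_inv, hWrT]
  set V : Matrix (Fin m) (Fin m) ℂ := cm (Wr⁻¹) with hVdef
  have hWcV : cm Wr * V = 1 := by rw [hVdef, ← cm_mul, hWW, cm_one]
  have hVWc : V * cm Wr = 1 := by rw [hVdef, ← cm_mul, hWW', cm_one]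
  set S : Matrix (Fin n) (Fin m) ℝ := X * B + Cᵀ * D with hSdef
  have hSt : Sᵀ = Bᵀ * X + Dᵀ * C := by
    rw [hSdef]
    simp [Matrix.transpose_add, Matrix.transpose_mul, hXt]
  set Mr : Matrix (Fin n) (Fin n) ℝ := X * A + Aᵀ * X + Cᵀ * C + S * Wr⁻¹ * Sᵀ with hMrdef
  have hMr : Mr.PosDef := by rw [hMrdef, hSt]; exact hIneq
  -- scalar atoms
  set t1 := star x ⬝ᵥ (cm X *ᵥ x) with ht1
  set t2 := star x ⬝ᵥ (cm X *ᵥ (cm B *ᵥ u)) with ht2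
  set t3 := star u ⬝ᵥ (cm Bᵀ *ᵥ (cm X *ᵥ x)) with ht3
  set c1 := star x ⬝ᵥ (cm Cᵀ *ᵥ (cm C *ᵥ x)) with hc1
  set c2 := star x ⬝ᵥ (cm Cᵀ *ᵥ (cm D *ᵥ u)) with hc2
  set c3 := star u ⬝ᵥ (cm Dᵀ *ᵥ (cm C *ᵥ x)) with hc3
  set d1 := star u ⬝ᵥ (cm Dᵀ *ᵥ (cm D *ᵥ u)) with hd1
  set w : Fin m → ℂ := cm Sᵀ *ᵥ x with hwdef
  set v : Fin m → ℂ := V *ᵥ w - (show Fin m → ℂ from u) with hvdef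
  set r := star x ⬝ᵥ (cm S *ᵥ (V *ᵥ w)) with hr
  -- unit norm facts
  have hsum : ∑ i, ‖u i‖ ^ 2 = (1:ℝ) := by
    have h := hu
    rw [EuclideanSpace.norm_eq] at h
    rwa [Real.sqrt_eq_one] at h
  have n1 : star u ⬝ᵥ u = (1:ℂ) := by
    have h : star u ⬝ᵥ u = ((∑ i, ‖u i‖ ^ 2 : ℝ) : ℂ) := by
      simp only [dotProduct, Pi.star_apply, RCLike.star_def, Complex.conj_mul',
        Complex.ofReal_sum, Complex.ofReal_pow]
    rw [h, hsum, Complex.ofReal_one]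
  have hu0 : (u : Fin m → ℂ) ≠ 0 := by
    intro h
    rw [h] at n1
    simp at n1
  -- adjoint helpers
  have hCadj : ∀ z : Fin p → ℂ, star (cm C *ᵥ x) ⬝ᵥ z = star x ⬝ᵥ (cm Cᵀ *ᵥ z) := by
    intro z
    rw [adj Cᵀ x z, Matrix.transpose_transpose]
  have hDadj : ∀ z : Fin p → ℂ, star (cm D *ᵥ u) ⬝ᵥ z = star u ⬝ᵥ (cm Dᵀ *ᵥ z) := by
    intro z
    rw [adj Dᵀ u z, Matrix.transpose_transpose]
  have hVadj : ∀ z : Fin m → ℂ, star (V *ᵥ w) ⬝ᵥ z = star w ⬝ᵥ (V *ᵥ z) := by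
    intro z
    rw [hVdef, adj Wr⁻¹ w z, hWiT]
  have hSadj : ∀ q : Fin m → ℂ, star x ⬝ᵥ (cm S *ᵥ q) = star w ⬝ᵥ q := by
    intro q
    rw [adj S x q, ← hwdef]
  have hSt' : cm Sᵀ = cm Bᵀ * cm X + cm Dᵀ * cm C := by
    rw [hSt, cm_add, cm_mul, cm_mul]
  have hScm : cm S = cm X * cm B + cm Cᵀ * cm D := by
    rw [hSdef, cm_add, cm_mul, cm_mul]
  have hWc' : cm Wr = (((γ:ℝ) ^ 2 : ℝ) : ℂ) • 1 - cm Dᵀ * cm D := by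
    rw [hWrdef, cm_sub, cm_smul, cm_one, cm_mul]
  have hμstar : star μ = -μ := by
    simp [hμdef]
  -- pieces of α
  have e1 : star x ⬝ᵥ ((cm X * cm A) *ᵥ x) = μ * t1 - t2 := by
    rw [← Matrix.mulVec_mulVec, hAx, Matrix.mulVec_sub, Matrix.mulVec_smul,
      dotProduct_sub, dotProduct_smul, smul_eq_mul]
  have hBX : star (cm B *ᵥ u) ⬝ᵥ (cm X *ᵥ x) = t3 := by
    rw [ht3, adj Bᵀ u (cm X *ᵥ x), Matrix.transpose_transpose]
  have e2 : star x ⬝ᵥ ((cm Aᵀ * cm X) *ᵥ x) = -(μ * t1) - t3 := by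
    rw [← Matrix.mulVec_mulVec, adj Aᵀ x (cm X *ᵥ x), Matrix.transpose_transpose, hAx,
      star_sub, star_smul, sub_dotProduct, smul_dotProduct, hμstar, hBX, ht1, smul_eq_mul]
    ring
  have e3 : star x ⬝ᵥ ((cm Cᵀ * cm C) *ᵥ x) = c1 := by
    rw [← Matrix.mulVec_mulVec, hc1]
  have e4 : star x ⬝ᵥ ((cm S * V * cm Sᵀ) *ᵥ x) = r := by
    rw [← Matrix.mulVec_mulVec, ← Matrix.mulVec_mulVec, hr, hwdef]
  have hα : star x ⬝ᵥ (cm Mr *ᵥ x) = c1 + r - t2 - t3 := by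
    have hMc : cm Mr = cm X * cm A + cm Aᵀ * cm X + cm Cᵀ * cm C + cm S * V * cm Sᵀ := by
      rw [hMrdef, cm_add, cm_add, cm_add, cm_mul, cm_mul, cm_mul, cm_mul, cm_mul, hVdef]
    rw [hMc, Matrix.add_mulVec, Matrix.add_mulVec, Matrix.add_mulVec,
      dotProduct_add, dotProduct_add, dotProduct_add, e1, e2, e3, e4]
    ring
  -- pieces of β
  have hSu : star x ⬝ᵥ (cm S *ᵥ u) = t2 + c2 := by
    rw [hScm, Matrix.add_mulVec, ← Matrix.mulVec_mulVec, ← Matrix.mulVec_mulVec,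
      dotProduct_add, ht2, hc2]
  have hSx : star u ⬝ᵥ (cm Sᵀ *ᵥ x) = t3 + c3 := by
    rw [hSt', Matrix.add_mulVec, ← Matrix.mulVec_mulVec, ← Matrix.mulVec_mulVec,
      dotProduct_add, ht3, hc3]
  have hWu : star u ⬝ᵥ (cm Wr *ᵥ u) = (((γ:ℝ) ^ 2 : ℝ) : ℂ) * (star u ⬝ᵥ u) - d1 := by
    rw [hWc', Matrix.sub_mulVec, Matrix.smul_mulVec, Matrix.one_mulVec,
      ← Matrix.mulVec_mulVec, dotProduct_sub, dotProduct_smul, smul_eq_mul, hd1]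
  have hβ : star v ⬝ᵥ (cm Wr *ᵥ v)
      = r - (t2 + c2) - (t3 + c3) + (((γ:ℝ) ^ 2 : ℝ) : ℂ) - d1 := by
    have hWv : cm Wr *ᵥ v = w - cm Wr *ᵥ u := by
      rw [hvdef, Matrix.mulVec_sub, Matrix.mulVec_mulVec, hWcV, Matrix.one_mulVec]
    have hT1 : star (V *ᵥ w) ⬝ᵥ w = r := by
      rw [hVadj w, hr, hSadj (V *ᵥ w)]
    have hT2 : star (V *ᵥ w) ⬝ᵥ (cm Wr *ᵥ u) = t2 + c2 := by
      rw [hVadj (cm Wr *ᵥ u), Matrix.mulVec_mulVec, hVWc, Matrix.one_mulVec,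
        ← hSadj u, hSu]
    have hT3 : star u ⬝ᵥ w = t3 + c3 := by
      rw [hwdef, hSx]
    rw [hvdef, hWv, star_sub, sub_dotProduct, dotProduct_sub, dotProduct_sub,
      hT1, hT2, hT3, hWu, n1]
    ring
  -- left-hand side
  have hLHS : star y ⬝ᵥ y = c1 + c2 + c3 + d1 := by
    rw [hydef, star_add, add_dotProduct, dotProduct_add, dotProduct_add,
      hCadj (cm C *ᵥ x), hCadj (cm D *ᵥ u), hDadj (cm C *ᵥ x), hDadj (cm D *ᵥ u),
      hc1, hc2, hc3, hd1]
    ring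
  -- the identity
  have hαβ : star y ⬝ᵥ y = (((γ:ℝ) ^ 2 : ℝ) : ℂ)
      + star x ⬝ᵥ (cm Mr *ᵥ x) - star v ⬝ᵥ (cm Wr *ᵥ v) := by
    rw [hLHS, hα, hβ]
    ring
  have hre : (star y ⬝ᵥ y).re
      = γ ^ 2 + (star x ⬝ᵥ (cm Mr *ᵥ x)).re - (star v ⬝ᵥ (cm Wr *ᵥ v)).re := by
    rw [hαβ, Complex.sub_re, Complex.add_re, Complex.ofReal_re]
  -- sign analysis
  have hβle : (star v ⬝ᵥ (cm Wr *ᵥ v)).re ≤ 0 ∧ (v ≠ 0 → (star v ⬝ᵥ (cm Wr *ᵥ v)).re < 0) := by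
    have hneg : ∀ v' : Fin m → ℂ, v' ≠ 0 → (star v' ⬝ᵥ (cm Wr *ᵥ v')).re < 0 := by
      intro v' hv'
      have hpos := posdef_map hDW hv'
      have hcmneg : cm (-Wr) = -(cm Wr) := by
        ext i j
        simp
      rw [hcmneg, Matrix.neg_mulVec, dotProduct_neg, Complex.neg_re] at hpos
      linarith
    constructor
    · by_cases hv : v = 0
      · rw [hv]
        simp
      · exact (hneg v hv).le
    · exact hneg v
  have key : γ ^ 2 < (star y ⬝ᵥ y).re := by
    by_cases hx : x = 0
    · have hv0 : v ≠ 0 := by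
        intro h
        apply hu0
        have : w = 0 := by rw [hwdef, hx, Matrix.mulVec_zero]
        rw [hvdef, this, Matrix.mulVec_zero] at h
        funext i
        have := congrFun h i
        simpa using this
      have hα0 : (star x ⬝ᵥ (cm Mr *ᵥ x)).re = 0 := by
        rw [hx]
        simp
      have := hβle.2 hv0
      rw [hre, hα0]
      linarith
    · have hαpos := posdef_map hMr hx
      have := hβle.1
      rw [hre]
      linarith
  -- norms
  have hnorm : ‖(WithLp.equiv 2 (Fin p → ℂ)).symm
      ((cm C * Z⁻¹ * cm B + cm D) *ᵥ u)‖ = Real.sqrt ((star y ⬝ᵥ y).re) := by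
    rw [hy, EuclideanSpace.norm_eq]
    congr 1
    simp only [dotProduct, Pi.star_apply, Complex.re_sum, WithLp.equiv_symm_apply, PiLp.toLp_apply]
    refine Finset.sum_congr rfl fun i _ => ?_
    rw [RCLike.star_def, Complex.conj_mul', ← Complex.ofReal_pow, Complex.ofReal_re]
  rw [hnorm]
  rw [show γ = Real.sqrt (γ ^ 2) by rw [Real.sqrt_sq hγ.le]]
  apply Real.sqrt_lt_sqrt (by positivity) key
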